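/- Let ℓ : ℝⁿ → ℝ₊ be continuous, positive-definite (ℓ(x)=0 ↔ x=0), symmetric (ℓ(-x)=ℓ(x)), and satisfy the generalized homogeneity property: there exists a class-K∞ function f such that ℓ(x) ≥ f(1/|r|)·ℓ(r·x) for all x ∈ ℝⁿ and all nonzero reals r. Then for any norm ‖·‖ on ℝⁿ there exist class-K∞ functions ξ₁, ξ₂ with ξ₁(‖θ‖) ≤ ℓ(θ) ≤ ξ₂(‖θ‖) for all θ ∈ ℝⁿ. -/

import Mathlib

open Finset Filter

/-- A class-K∞ function: continuous on [0,∞), zero at zero, strictly increasing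
on [0,∞), and tending to ∞ at ∞. -/
def ClassKInf (f : ℝ → ℝ) : Prop :=
  ContinuousOn f (Set.Ici 0) ∧ f 0 = 0 ∧ StrictMonoOn f (Set.Ici 0) ∧
    Tendsto f atTop atTop

/-- Dot product on ℝⁿ. -/
def dot {n : ℕ} (x θ : Fin n → ℝ) : ℝ := ∑ i, x i * θ i

/-- `N` is a norm on ℝⁿ. -/
def IsNorm {n : ℕ} (N : (Fin n → ℝ) → ℝ) : Prop :=
  (∀ x, 0 ≤ N x) ∧ (∀ x, N x = 0 ↔ x = 0) ∧
    (∀ (a : ℝ) (x), N (a • x) = |a| * N x) ∧ (∀ x y, N (x + y) ≤ N x + N y)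

lemma classKInf_pos {f : ℝ → ℝ} (hf : ClassKInf f) {t : ℝ} (ht : 0 < t) : 0 < f t := by
  have h := hf.2.2.1 Set.self_mem_Ici (Set.mem_Ici.mpr ht.le) ht
  rwa [hf.2.1] at h

lemma classKInf_id : ClassKInf (fun s : ℝ => s) :=
  ⟨continuousOn_id, rfl, fun _ _ _ _ h => h, tendsto_id⟩

lemma classKInf_scale {f : ℝ → ℝ} (hf : ClassKInf f) {m C : ℝ} (hm : 0 < m) (hC : 0 < C) :
    ClassKInf (fun s => m * f (s / C)) := by
  refine ⟨?_, ?_, ?_, ?_⟩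
  · exact continuousOn_const.mul (hf.1.comp (continuous_id.div_const C).continuousOn
      (fun s hs => Set.mem_Ici.mpr (div_nonneg (Set.mem_Ici.mp hs) hC.le)))
  · simp [hf.2.1]
  · intro a ha b hb hab
    exact mul_lt_mul_of_pos_left
      (hf.2.2.1 (Set.mem_Ici.mpr (div_nonneg (Set.mem_Ici.mp ha) hC.le))
        (Set.mem_Ici.mpr (div_nonneg (Set.mem_Ici.mp hb) hC.le))
        (div_lt_div_of_pos_right hab hC)) hm
  · exact (hf.2.2.2.comp (tendsto_id.atTop_div_const hC)).const_mul_atTop hm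

lemma classKInf_recip {f : ℝ → ℝ} (hf : ClassKInf f) {M c : ℝ} (hM : 0 < M) (hc : 0 < c) :
    ClassKInf (fun s => if s ≤ 0 then 0 else M / f (c / s)) := by
  set g : ℝ → ℝ := fun s => if s ≤ 0 then 0 else M / f (c / s) with hg
  have hfpos : ∀ t : ℝ, 0 < t → 0 < f t := fun t ht => classKInf_pos hf ht
  have hgpos : ∀ s : ℝ, 0 < s → g s = M / f (c / s) := by
    intro s hs; simp [hg, not_le.mpr hs]
  refine ⟨?_, ?_, ?_, ?_⟩
  · intro s hs
    rcases eq_or_lt_of_le (Set.mem_Ici.mp hs) with h0 | h0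
    · -- continuity at 0 within Ici 0
      rw [← h0]
      have : Set.Ici (0:ℝ) = {0} ∪ Set.Ioi 0 := by
        ext t; simp [le_iff_lt_or_eq, or_comm, eq_comm]
      unfold ContinuousWithinAt
      have hg0 : g 0 = 0 := by simp [hg]
      rw [hg0, this, nhdsWithin_union]
      refine tendsto_sup.mpr ⟨?_, ?_⟩
      · rw [nhdsWithin_singleton]
        have h := tendsto_pure_nhds g 0
        rwa [hg0] at h
      · have h1 : Tendsto (fun s : ℝ => c / s) (nhdsWithin 0 (Set.Ioi 0)) atTop := by
          simpa [div_eq_mul_inv] using tendsto_inv_nhdsGT_zero.const_mul_atTop hc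
        have h2 : Tendsto (fun s : ℝ => M / f (c / s)) (nhdsWithin 0 (Set.Ioi 0)) (nhds 0) :=
          tendsto_const_nhds.div_atTop (hf.2.2.2.comp h1)
        refine h2.congr' ?_
        filter_upwards [self_mem_nhdsWithin] with s hs
        exact (hgpos s hs).symm
    · -- continuity at s > 0
      have : ContinuousAt g s := by
        have hev : ∀ᶠ t in nhds s, g t = M / f (c / t) := by
          filter_upwards [eventually_gt_nhds h0] with t ht using hgpos t ht
        refine ContinuousAt.congr ?_ (Filter.EventuallyEq.symm hev)
        have hfc : ContinuousAt f (c / s) := by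
          refine hf.1.continuousAt (Ici_mem_nhds ?_)
          exact div_pos hc h0
        exact continuousAt_const.div (hfc.comp (continuousAt_const.div continuousAt_id h0.ne'))
          (hfpos _ (div_pos hc h0)).ne'
      exact this.continuousWithinAt
  · simp [hg]
  · intro a ha b hb hab
    rcases eq_or_lt_of_le (Set.mem_Ici.mp ha) with h0 | h0
    · rw [← h0] at hab ⊢
      have : g 0 = 0 := by simp [hg]
      rw [this, hgpos b hab]
      exact div_pos hM (hfpos _ (div_pos hc hab))
    · rw [hgpos a h0, hgpos b (h0.trans hab)]
      refine div_lt_div_of_pos_left hM (hfpos _ (div_pos hc (h0.trans hab))) ?_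
      refine hf.2.2.1 (Set.mem_Ici.mpr (div_pos hc (h0.trans hab)).le)
        (Set.mem_Ici.mpr (div_pos hc h0).le) ?_
      exact div_lt_div_of_pos_left hc h0 hab
  · -- tendsto atTop
    have h1 : Tendsto (fun s : ℝ => c / s) atTop (nhdsWithin 0 (Set.Ioi 0)) := by
      rw [tendsto_nhdsWithin_iff]
      constructor
      · simpa [div_eq_mul_inv] using tendsto_inv_atTop_zero.const_mul c
      · filter_upwards [eventually_gt_atTop 0] with s hs
        exact div_pos hc hs
    have h2 : Tendsto (fun s : ℝ => f (c / s)) atTop (nhdsWithin 0 (Set.Ioi 0)) := by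
      rw [tendsto_nhdsWithin_iff]
      constructor
      · have := (hf.1.continuousWithinAt Set.self_mem_Ici)
        unfold ContinuousWithinAt at this
        rw [hf.2.1] at this
        refine this.comp (h1.mono_right (nhdsWithin_mono _ Set.Ioi_subset_Ici_self))
      · filter_upwards [eventually_gt_atTop 0] with s hs
        exact hfpos _ (div_pos hc hs)
    have h3 : Tendsto (fun s : ℝ => M / f (c / s)) atTop atTop := by
      have := h2.inv_tendsto_nhdsGT_zero
      simpa [div_eq_mul_inv] using this.const_mul_atTop hM
    refine h3.congr' ?_
    filter_upwards [eventually_gt_atTop 0] with s hs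
    exact (hgpos s hs).symm

/-- A continuous, positive-definite, symmetric function satisfying
generalized homogeneity is sandwiched between two class-K∞ functions of any norm. -/
theorem stmt_0 {n : ℕ} (ℓ : (Fin n → ℝ) → ℝ) (f : ℝ → ℝ)
    (hcont : Continuous ℓ) (hnn : ∀ x, 0 ≤ ℓ x)
    (hpd : ∀ x, ℓ x = 0 ↔ x = 0) (hsym : ∀ x, ℓ (-x) = ℓ x)
    (hf : ClassKInf f)
    (hGH : ∀ (x : Fin n → ℝ) (r : ℝ), r ≠ 0 → f (1 / |r|) * ℓ (r • x) ≤ ℓ x)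
    (N : (Fin n → ℝ) → ℝ) (hN : IsNorm N) :
    ∃ ξ₁ ξ₂ : ℝ → ℝ, ClassKInf ξ₁ ∧ ClassKInf ξ₂ ∧
      ∀ θ : Fin n → ℝ, ξ₁ (N θ) ≤ ℓ θ ∧ ℓ θ ≤ ξ₂ (N θ) := by
  rcases Nat.eq_zero_or_pos n with hn | hn
  · -- trivial case n = 0
    subst hn
    refine ⟨fun s => s, fun s => s, classKInf_id, classKInf_id, ?_⟩
    intro θ
    have hθ : θ = 0 := Subsingleton.elim _ _
    have h1 : ℓ θ = 0 := (hpd θ).mpr hθ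
    have h2 : N θ = 0 := (hN.2.1 θ).mpr hθ
    simp [h1, h2]
  · -- main case
    have : Nontrivial (Fin n → ℝ) := by
      haveI : Nonempty (Fin n) := ⟨⟨0, hn⟩⟩
      infer_instance
    obtain ⟨N0, Npd, Nhom, Ntri⟩ := hN
    -- N is continuous
    have Nzero : N 0 = 0 := (Npd 0).mpr rfl
    have Nsub : ∀ x y : Fin n → ℝ, N x ≤ N y + N (x - y) := by
      intro x y
      calc N x = N (y + (x - y)) := by ring_nf
        _ ≤ N y + N (x - y) := Ntri _ _
    have Nbound : ∀ x : Fin n → ℝ, N x ≤ ∑ i, |x i| * N (fun j => if i = j then 1 else 0) := by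
      intro x
      calc N x = N (∑ i, x i • fun j => if i = j then (1:ℝ) else 0) := by
            rw [← pi_eq_sum_univ x]
        _ ≤ ∑ i, N (x i • fun j => if i = j then (1:ℝ) else 0) :=
            Finset.le_sum_of_subadditive N Nzero.le Ntri _ _
        _ = ∑ i, |x i| * N (fun j => if i = j then 1 else 0) := by
            simp [Nhom]
    set K : ℝ := ∑ i : Fin n, N (fun j => if i = j then 1 else 0) with hK
    have Ncont : Continuous N := by
      rw [Metric.continuous_iff]
      intro x ε hε
      have hKnn : 0 ≤ K := Finset.sum_nonneg fun i _ => N0 _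
      exact ⟨ε / (K + 1), by positivity, by
          intro y hy
          have h1 : N y ≤ N x + N (y - x) := Nsub y x
          have h2 : N x ≤ N y + N (x - y) := Nsub x y
          have h3 : ∀ z : Fin n → ℝ, N z ≤ K * ‖z‖ := by
            intro z
            calc N z ≤ ∑ i, |z i| * N (fun j => if i = j then 1 else 0) := Nbound z
              _ ≤ ∑ i, ‖z‖ * N (fun j => if i = j then 1 else 0) := by
                  refine Finset.sum_le_sum fun i _ => ?_
                  exact mul_le_mul_of_nonneg_right (by
                    have := norm_le_pi_norm z i
                    simpa [Real.norm_eq_abs] using this) (N0 _)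
              _ = K * ‖z‖ := by rw [← Finset.mul_sum, ← hK]; ring
          have hd : dist y x < ε / (K + 1) := hy
          have h4 : N (y - x) ≤ K * ‖y - x‖ := h3 _
          have h5 : N (x - y) ≤ K * ‖x - y‖ := h3 _
          have hyx : ‖y - x‖ = dist y x := by rw [dist_eq_norm]
          have hxy : ‖x - y‖ = dist y x := by rw [dist_eq_norm, norm_sub_rev]
          have : |N y - N x| ≤ K * dist y x := by
            rw [abs_sub_le_iff]
            constructor
            · linarith [h1, h4, hyx ▸ h4]
            · rw [hxy] at h5; linarith
          have hKd : K * dist y x < ε := by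
            calc K * dist y x ≤ K * (ε / (K + 1)) := by
                  exact mul_le_mul_of_nonneg_left hd.le hKnn
              _ < (K + 1) * (ε / (K + 1)) := by
                  apply mul_lt_mul_of_pos_right (by linarith) (by positivity)
              _ = ε := by field_simp
          calc dist (N y) (N x) = |N y - N x| := Real.dist_eq _ _
            _ ≤ K * dist y x := this
            _ < ε := hKd⟩
    -- extrema of ℓ and N on the unit sphere of the sup norm
    have hsphere : IsCompact (Metric.sphere (0 : Fin n → ℝ) 1) := isCompact_sphere 0 1
    have hne : (Metric.sphere (0 : Fin n → ℝ) 1).Nonempty :=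
      NormedSpace.sphere_nonempty.mpr zero_le_one
    obtain ⟨u₁, hu₁, hmin⟩ := hsphere.exists_isMinOn hne hcont.continuousOn
    obtain ⟨u₂, hu₂, hmax⟩ := hsphere.exists_isMaxOn hne hcont.continuousOn
    obtain ⟨u₃, hu₃, hNmin⟩ := hsphere.exists_isMinOn hne Ncont.continuousOn
    have husphere : ∀ u : Fin n → ℝ, u ∈ Metric.sphere (0 : Fin n → ℝ) 1 → ‖u‖ = 1 := by
      intro u hu; simpa [Metric.mem_sphere, dist_eq_norm] using hu
    have hune : ∀ u : Fin n → ℝ, u ∈ Metric.sphere (0 : Fin n → ℝ) 1 → u ≠ 0 := by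
      intro u hu h0
      have := husphere u hu
      rw [h0] at this; simp at this
    set m : ℝ := ℓ u₁ with hm
    set M : ℝ := ℓ u₂ with hM
    set c : ℝ := N u₃ with hc
    have hmpos : 0 < m := by
      rcases lt_or_eq_of_le (hnn u₁) with h | h
      · exact h
      · exact absurd ((hpd u₁).mp h.symm) (hune u₁ hu₁)
    have hMpos : 0 < M := by
      rcases lt_or_eq_of_le (hnn u₂) with h | h
      · exact h
      · exact absurd ((hpd u₂).mp h.symm) (hune u₂ hu₂)
    have hcpos : 0 < c := by
      rcases lt_or_eq_of_le (N0 u₃) with h | h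
      · exact h
      · exact absurd ((Npd u₃).mp h.symm) (hune u₃ hu₃)
    have hKpos : 0 < K := by
      have : N u₃ ≤ K * ‖u₃‖ := by
        calc N u₃ ≤ ∑ i, |u₃ i| * N (fun j => if i = j then 1 else 0) := Nbound u₃
          _ ≤ ∑ i, ‖u₃‖ * N (fun j => if i = j then 1 else 0) := by
              refine Finset.sum_le_sum fun i _ => ?_
              exact mul_le_mul_of_nonneg_right
                (by simpa [Real.norm_eq_abs] using norm_le_pi_norm u₃ i) (N0 _)
          _ = K * ‖u₃‖ := by rw [← Finset.mul_sum, ← hK]; ring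
      rw [husphere u₃ hu₃, mul_one] at this
      linarith
    -- the two class-K∞ functions
    refine ⟨fun s => m * f (s / K), fun s => if s ≤ 0 then 0 else M / f (c / s),
      classKInf_scale hf hmpos hKpos, classKInf_recip hf hMpos hcpos, ?_⟩
    intro θ
    rcases eq_or_ne θ 0 with h0 | h0
    · subst h0
      have h1 : ℓ 0 = 0 := (hpd 0).mpr rfl
      rw [h1, (Npd 0).mpr rfl]
      constructor
      · simp [hf.2.1]
      · simp
    · -- θ ≠ 0
      have ht : 0 < ‖θ‖ := norm_pos_iff.mpr h0
      set t : ℝ := ‖θ‖ with htdef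
      set u : Fin n → ℝ := t⁻¹ • θ with hu
      have hunorm : u ∈ Metric.sphere (0 : Fin n → ℝ) 1 := by
        simp only [Metric.mem_sphere, dist_zero_right, hu, norm_smul, norm_inv,
          Real.norm_eq_abs, abs_of_pos ht]
        field_simp
        exact htdef.symm
      have hNθpos : 0 < N θ := by
        rcases lt_or_eq_of_le (N0 θ) with h | h
        · exact h
        · exact absurd ((Npd θ).mp h.symm) h0
      have hNub : N θ ≤ K * t := by
        calc N θ ≤ ∑ i, |θ i| * N (fun j => if i = j then 1 else 0) := Nbound θ
          _ ≤ ∑ i, t * N (fun j => if i = j then 1 else 0) := by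
              refine Finset.sum_le_sum fun i _ => ?_
              exact mul_le_mul_of_nonneg_right
                (by simpa [Real.norm_eq_abs] using norm_le_pi_norm θ i) (N0 _)
          _ = K * t := by rw [← Finset.mul_sum, ← hK]; ring
      have hNlb : c * t ≤ N θ := by
        have : c ≤ N u := hNmin hunorm
        have h2 : N u = t⁻¹ * N θ := by
          rw [hu, Nhom, abs_inv, abs_of_pos ht]
        rw [h2] at this
        calc c * t ≤ t⁻¹ * N θ * t := mul_le_mul_of_nonneg_right this ht.le
          _ = N θ := by field_simp
      constructor
      · -- lower bound
        have hGH1 := hGH θ t⁻¹ (by positivity)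
        have h1 : (1 : ℝ) / |t⁻¹| = t := by
          rw [abs_inv, abs_of_pos ht]; field_simp
        rw [h1] at hGH1
        have h2 : m ≤ ℓ u := hmin hunorm
        have hft : 0 < f t := classKInf_pos hf ht
        have h3 : m * f t ≤ f t * ℓ u := by
          rw [mul_comm m (f t)]
          exact mul_le_mul_of_nonneg_left h2 hft.le
        have h4 : m * f (N θ / K) ≤ m * f t := by
          refine mul_le_mul_of_nonneg_left ?_ hmpos.le
          rcases eq_or_lt_of_le (div_le_iff₀ hKpos |>.mpr (by linarith : N θ ≤ t * K)) with h | h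
          · rw [h]
          · exact (hf.2.2.1 (Set.mem_Ici.mpr (by positivity)) (Set.mem_Ici.mpr ht.le) h).le
        calc m * f (N θ / K) ≤ m * f t := h4
          _ ≤ f t * ℓ u := h3
          _ ≤ ℓ θ := hGH1
      · -- upper bound
        have hGH2 := hGH u t (by positivity)
        have h1 : (1 : ℝ) / |t| = t⁻¹ := by rw [abs_of_pos ht, one_div]
        have h2 : t • u = θ := by rw [hu, smul_smul]; field_simp; exact one_smul _ _
        rw [h1, h2] at hGH2
        have h3 : ℓ u ≤ M := hmax hunorm
        have hft : 0 < f t⁻¹ := classKInf_pos hf (by positivity)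
        have h4 : ℓ θ ≤ M / f t⁻¹ := by
          rw [le_div_iff₀ hft]
          calc ℓ θ * f t⁻¹ = f t⁻¹ * ℓ θ := by ring
            _ ≤ ℓ u := hGH2
            _ ≤ M := h3
        have h5 : f (c / N θ) ≤ f t⁻¹ := by
          have hcNθ : c / N θ ≤ t⁻¹ := by
            rw [div_le_iff₀ hNθpos]
            calc c = c * t * t⁻¹ := by field_simp
              _ ≤ N θ * t⁻¹ := mul_le_mul_of_nonneg_right hNlb (by positivity)
              _ = t⁻¹ * N θ := by ring
          rcases eq_or_lt_of_le hcNθ with h | h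
          · rw [h]
          · exact (hf.2.2.1 (Set.mem_Ici.mpr (by positivity))
              (Set.mem_Ici.mpr (by positivity)) h).le
        have h6 : M / f t⁻¹ ≤ M / f (c / N θ) :=
          div_le_div_of_nonneg_left hMpos.le (classKInf_pos hf (by positivity)) h5
        have h7 : ¬ (N θ ≤ 0) := not_le.mpr hNθpos
        simp only [if_neg h7]
        linarith
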